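/- Let ℓ ≥ 1 be an integer and let p, p' ∈ (0,1). Let Z, Z', S be independent random variables where Z is Bernoulli with parameter p, Z' is Bernoulli with parameter p', and S is binomial with parameters ℓ and p'. Then the Kullback-Leibler divergence between the law of Z + S and the law of Z' + S satisfies KL(Z+S, Z'+S) ≤ (p − p')² / ((1 − p')·p'·(ℓ + 1)). -/

import Mathlib

/-- Probability mass function on ℕ of a Bernoulli distribution with parameter `p`. -/
noncomputable def bernoulliPMF (p : ℝ) : ℕ → ℝ :=
  fun k => if k = 0 then 1 - p else if k = 1 then p else 0

/-- Probability mass function on ℕ of a binomial distribution with parameters `m` and `q`. -/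
noncomputable def binomialPMF (m : ℕ) (q : ℝ) : ℕ → ℝ :=
  fun k => (m.choose k : ℝ) * q ^ k * (1 - q) ^ (m - k)

/-- Convolution of two mass functions on ℕ: the law of an independent sum. -/
noncomputable def convPMF (P Q : ℕ → ℝ) : ℕ → ℝ :=
  fun k => ∑ j ∈ Finset.range (k + 1), P j * Q (k - j)

/-- Kullback-Leibler divergence between two mass functions on ℕ
(with the convention `0 * log 0 = 0`, which holds automatically here). -/
noncomputable def klDivN (P Q : ℕ → ℝ) : ℝ :=
  ∑' k, P k * Real.log (P k / Q k)

/-- shift of a pmf by one -/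
noncomputable def shiftPMF (f : ℕ → ℝ) : ℕ → ℝ :=
  fun k => if k = 0 then 0 else f (k - 1)

lemma shiftPMF_succ (f : ℕ → ℝ) (n : ℕ) : shiftPMF f (n+1) = f n := by
  simp [shiftPMF]

lemma sum_shiftPMF (f : ℕ → ℝ) (n : ℕ) :
    ∑ k ∈ Finset.range (n+1), shiftPMF f k = ∑ k ∈ Finset.range n, f k := by
  rw [Finset.sum_range_succ']
  simp [shiftPMF]

lemma conv_bern (p : ℝ) (f : ℕ → ℝ) (k : ℕ) :
    convPMF (bernoulliPMF p) f k = (1 - p) * f k + p * shiftPMF f k := by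
  cases k with
  | zero => simp [convPMF, bernoulliPMF, shiftPMF]
  | succ n =>
    unfold convPMF
    have h : ∀ j ∈ Finset.range (n+2), bernoulliPMF p j * f (n+1-j)
        = (if j = 0 then (1-p) * f (n+1) else 0) + (if j = 1 then p * f n else 0) := by
      intro j _
      unfold bernoulliPMF
      rcases j with _ | _ | j <;> simp
    rw [Finset.sum_congr rfl h, Finset.sum_add_distrib]
    rw [Finset.sum_ite_eq' (Finset.range (n+2)) 0 (fun _ => (1-p) * f (n+1)),
        Finset.sum_ite_eq' (Finset.range (n+2)) 1 (fun _ => p * f n)]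
    simp [shiftPMF]

lemma binomialPMF_sum (m : ℕ) (q : ℝ) :
    ∑ k ∈ Finset.range (m+1), binomialPMF m q k = 1 := by
  have h := add_pow q (1-q) m
  simp only [add_sub_cancel, one_pow] at h
  rw [show (1:ℝ) = (q + (1-q))^m by ring_nf, add_pow]
  refine Finset.sum_congr rfl fun k _ => ?_
  unfold binomialPMF; ring

lemma binomialPMF_eq_zero (m : ℕ) (q : ℝ) (k : ℕ) (h : m < k) :
    binomialPMF m q k = 0 := by
  simp [binomialPMF, Nat.choose_eq_zero_of_lt h]

lemma binomialPMF_nonneg (m : ℕ) (q : ℝ) (h0 : 0 < q) (h1 : q < 1) (k : ℕ) :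
    0 ≤ binomialPMF m q k := by
  unfold binomialPMF
  have h2 : (0:ℝ) ≤ 1 - q := by linarith
  have h3 : (0:ℝ) ≤ (m.choose k : ℝ) := by positivity
  exact mul_nonneg (mul_nonneg h3 (by positivity)) (pow_nonneg h2 _)

lemma binomialPMF_pos (m : ℕ) (q : ℝ) (h0 : 0 < q) (h1 : q < 1) (k : ℕ) (hk : k ≤ m) :
    0 < binomialPMF m q k := by
  unfold binomialPMF
  have : 0 < (m.choose k : ℝ) := by exact_mod_cast Nat.choose_pos hk
  have : (0:ℝ) < 1 - q := by linarith
  positivity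

lemma choose_key (m j : ℕ) :
    (m+2) * ((m+1).choose (j+1)) * ((m+1).choose j)
      = (m+1) * (m.choose j) * ((m+2).choose (j+1)) := by
  have h1 : (m+2) * (m+1).choose j = (m+2).choose (j+1) * (j+1) :=
    Nat.add_one_mul_choose_eq (m+1) j
  have h2 : (m+1) * m.choose j = (m+1).choose (j+1) * (j+1) :=
    Nat.add_one_mul_choose_eq m j
  calc (m+2) * ((m+1).choose (j+1)) * ((m+1).choose j)
      = ((m+2) * (m+1).choose j) * (m+1).choose (j+1) := by ring
    _ = ((m+2).choose (j+1) * (j+1)) * (m+1).choose (j+1) := by rw [h1]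
    _ = ((m+1) * m.choose j) * (m+2).choose (j+1) := by rw [h2]; ring

theorem stmt_7 (ℓ : ℕ) (hℓ : 1 ≤ ℓ)
    (p p' : ℝ) (hp : p ∈ Set.Ioo (0 : ℝ) 1) (hp' : p' ∈ Set.Ioo (0 : ℝ) 1) :
    klDivN (convPMF (bernoulliPMF p) (binomialPMF ℓ p'))
        (convPMF (bernoulliPMF p') (binomialPMF ℓ p')) ≤
      (p - p') ^ 2 / ((1 - p') * p' * ((ℓ : ℝ) + 1)) := by
  obtain ⟨m, rfl⟩ : ∃ m, ℓ = m + 1 := ⟨ℓ - 1, (Nat.succ_pred_eq_of_pos hℓ).symm⟩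
  obtain ⟨hp0, hp1⟩ := hp
  obtain ⟨hv0, hv1⟩ := hp'
  have hu0 : (0:ℝ) < 1 - p' := by linarith
  set b : ℕ → ℝ := binomialPMF (m+1) p' with hbdef
  set β : ℕ → ℝ := shiftPMF b with hβdef
  set γ : ℕ → ℝ := shiftPMF (binomialPMF m p') with hγdef
  set P : ℕ → ℝ := fun k => (1-p) * b k + p * β k with hPdef
  set Q : ℕ → ℝ := fun k => (1-p') * b k + p' * β k with hQdef
  have hbnn : ∀ k, 0 ≤ b k := binomialPMF_nonneg _ _ hv0 hv1
  have hβnn : ∀ k, 0 ≤ β k := by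
    intro k
    cases k with
    | zero => simp [hβdef, shiftPMF]
    | succ n => rw [hβdef, shiftPMF_succ]; exact hbnn n
  have hb0 : ∀ k, m + 2 ≤ k → b k = 0 := fun k hk =>
    binomialPMF_eq_zero _ _ _ (by omega)
  have hβ0 : ∀ k, m + 3 ≤ k → β k = 0 := by
    intro k hk
    match k, hk with
    | n+1, hk => rw [hβdef, shiftPMF_succ]; exact hb0 n (by omega)
  have hP0 : ∀ k, m + 3 ≤ k → P k = 0 := by
    intro k hk
    simp only [hPdef, hb0 k (by omega), hβ0 k hk]
    ring
  have hPnn : ∀ k, 0 ≤ P k := by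
    intro k
    have := hbnn k; have := hβnn k
    simp only [hPdef]
    nlinarith
  have hQpos : ∀ k, k < m + 3 → 0 < Q k := by
    intro k hk
    rcases Nat.lt_or_ge k (m+2) with h | h
    · have h1 := binomialPMF_pos (m+1) p' hv0 hv1 k (by omega)
      have h2 := hβnn k
      simp only [hQdef]
      rw [← hbdef] at h1
      nlinarith
    · have hk2 : k = m + 2 := by omega
      subst hk2
      have h1 : β (m+2) = b (m+1) := by rw [hβdef, shiftPMF_succ]
      have h2 := binomialPMF_pos (m+1) p' hv0 hv1 (m+1) le_rfl
      rw [← hbdef] at h2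
      have h3 := hbnn (m+2)
      simp only [hQdef, h1]
      nlinarith
  -- the key per-point algebraic identity
  have key : ∀ k, ((m:ℝ)+2) * b k * β k = ((m:ℝ)+1) * γ k * Q k := by
    intro k
    cases k with
    | zero => simp [hβdef, hγdef, shiftPMF]
    | succ j =>
      simp only [hβdef, hγdef, hQdef, shiftPMF_succ]
      rcases Nat.lt_or_ge m j with hj | hj
      · rw [hbdef]
        rw [binomialPMF_eq_zero (m+1) p' (j+1) (by omega),
            binomialPMF_eq_zero m p' j hj]
        ring
      · obtain ⟨d, rfl⟩ : ∃ d, m = j + d := ⟨m - j, by omega⟩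
        rw [hbdef]
        simp only [binomialPMF]
        have e1 : j + d + 1 - (j+1) = d := by omega
        have e2 : j + d + 1 - j = d + 1 := by omega
        have e3 : j + d - j = d := by omega
        rw [e1, e2, e3]
        have hkey := choose_key (j+d) j
        have hkey' : (((j+d+2) * ((j+d+1).choose (j+1)) * ((j+d+1).choose j) : ℕ) : ℝ)
            = (((j+d+1) * ((j+d).choose j) * ((j+d+2).choose (j+1)) : ℕ) : ℝ) := by
          exact_mod_cast hkey
        have hpas : (((j+d+2).choose (j+1) : ℕ) : ℝ)
            = (((j+d+1).choose j : ℕ) : ℝ) + (((j+d+1).choose (j+1) : ℕ) : ℝ) := by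
          have := Nat.choose_succ_succ (j+d+1) j
          exact_mod_cast this
        push_cast at hkey' hpas ⊢
        rw [hpas] at hkey'
        linear_combination (p'^(2*j+1) * (1-p')^(2*d+1)) * hkey'
  -- polynomial identity
  have hpoly : ∀ k, ((m:ℝ)+2) * ((1-p')*p') * (β k - b k)^2
      = Q k * (((m:ℝ)+2) * ((1-p') * β k + p' * b k) - ((m:ℝ)+1) * γ k) := by
    intro k
    have hk2 := key k
    simp only [hQdef] at hk2 ⊢
    linear_combination -hk2
  -- chi-square pointwise
  have hδ : ∀ k, k < m + 3 → (β k - b k)^2 / Q k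
      = (((m:ℝ)+2) * ((1-p') * β k + p' * b k) - ((m:ℝ)+1) * γ k)
          / (((m:ℝ)+2) * ((1-p')*p')) := by
    intro k hk
    have hQ := (hQpos k hk).ne'
    have hc : (((m:ℝ)+2) * ((1-p')*p')) ≠ 0 := by positivity
    rw [div_eq_div_iff hQ hc]
    linear_combination hpoly k
  -- sums
  have hsum_b : ∑ k ∈ Finset.range (m+3), b k = 1 := by
    rw [Finset.sum_range_succ, hb0 (m+2) le_rfl, add_zero, hbdef]
    exact binomialPMF_sum (m+1) p'
  have hsum_β : ∑ k ∈ Finset.range (m+3), β k = 1 := by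
    rw [hβdef, sum_shiftPMF, hbdef]
    exact binomialPMF_sum (m+1) p'
  have hsum_γ : ∑ k ∈ Finset.range (m+3), γ k = 1 := by
    rw [hγdef, sum_shiftPMF, Finset.sum_range_succ,
        binomialPMF_eq_zero m p' (m+1) (by omega), add_zero]
    exact binomialPMF_sum m p'
  have hsum_Q : ∑ k ∈ Finset.range (m+3), Q k = 1 := by
    simp only [hQdef]
    rw [Finset.sum_add_distrib, ← Finset.mul_sum, ← Finset.mul_sum, hsum_b, hsum_β]
    ring
  have hsum_P : ∑ k ∈ Finset.range (m+3), P k = 1 := by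
    simp only [hPdef]
    rw [Finset.sum_add_distrib, ← Finset.mul_sum, ← Finset.mul_sum, hsum_b, hsum_β]
    ring
  have hchi : ∑ k ∈ Finset.range (m+3), (β k - b k)^2 / Q k
      = 1 / (((m:ℝ)+2) * ((1-p')*p')) := by
    rw [Finset.sum_congr rfl fun k hk => hδ k (Finset.mem_range.mp hk)]
    rw [← Finset.sum_div]
    congr 1
    rw [Finset.sum_sub_distrib, ← Finset.mul_sum, ← Finset.mul_sum,
        Finset.sum_add_distrib, ← Finset.mul_sum, ← Finset.mul_sum,
        hsum_b, hsum_β, hsum_γ]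
    ring
  -- pointwise expansion of P^2/Q
  have hPQ : ∀ k, k < m + 3 → P k^2 / Q k
      = Q k + 2*(p-p')*(β k - b k) + (p-p')^2 * ((β k - b k)^2 / Q k) := by
    intro k hk
    have hQ := (hQpos k hk).ne'
    have hPmQ : P k = Q k + (p-p')*(β k - b k) := by
      simp only [hPdef, hQdef]; ring
    rw [hPmQ]
    field_simp
    ring
  have hsumP2Q : ∑ k ∈ Finset.range (m+3), P k^2 / Q k
      = 1 + (p-p')^2 * (1 / (((m:ℝ)+2) * ((1-p')*p'))) := by
    rw [Finset.sum_congr rfl fun k hk => hPQ k (Finset.mem_range.mp hk)]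
    rw [Finset.sum_add_distrib, Finset.sum_add_distrib, hsum_Q,
        ← Finset.mul_sum, ← Finset.mul_sum, hchi,
        Finset.sum_sub_distrib, hsum_b, hsum_β]
    ring
  -- pointwise log bound
  have hterm : ∀ k, k < m + 3 → P k * Real.log (P k / Q k) ≤ P k^2 / Q k - P k := by
    intro k hk
    have hQ := hQpos k hk
    rcases (hPnn k).eq_or_lt with h | h
    · rw [← h]; simp
    · have hl := Real.log_le_sub_one_of_pos (div_pos h hQ)
      have h2 := mul_le_mul_of_nonneg_left hl h.le
      calc P k * Real.log (P k / Q k) ≤ P k * (P k / Q k - 1) := h2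
        _ = P k^2 / Q k - P k := by field_simp
  -- rewrite klDivN as a finite sum
  have hPc : ∀ k, convPMF (bernoulliPMF p) (binomialPMF (m+1) p') k = P k := by
    intro k; rw [conv_bern]
  have hQc : ∀ k, convPMF (bernoulliPMF p') (binomialPMF (m+1) p') k = Q k := by
    intro k; rw [conv_bern]
  have hkl : klDivN (convPMF (bernoulliPMF p) (binomialPMF (m+1) p'))
      (convPMF (bernoulliPMF p') (binomialPMF (m+1) p'))
      = ∑ k ∈ Finset.range (m+3), P k * Real.log (P k / Q k) := by
    unfold klDivN
    rw [tsum_congr fun k => by rw [hPc k, hQc k]]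
    exact tsum_eq_sum (fun k hk => by
      rw [hP0 k (by simpa [Finset.mem_range] using hk), zero_mul])
  rw [hkl]
  have hfinal : ∑ k ∈ Finset.range (m+3), P k * Real.log (P k / Q k)
      ≤ (p-p')^2 * (1 / (((m:ℝ)+2) * ((1-p')*p'))) := by
    calc ∑ k ∈ Finset.range (m+3), P k * Real.log (P k / Q k)
        ≤ ∑ k ∈ Finset.range (m+3), (P k^2 / Q k - P k) :=
          Finset.sum_le_sum fun k hk => hterm k (Finset.mem_range.mp hk)
      _ = (1 + (p-p')^2 * (1 / (((m:ℝ)+2) * ((1-p')*p')))) - 1 := by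
          rw [Finset.sum_sub_distrib, hsumP2Q, hsum_P]
      _ = (p-p')^2 * (1 / (((m:ℝ)+2) * ((1-p')*p'))) := by ring
  refine hfinal.trans_eq ?_
  rw [mul_one_div]
  push_cast
  rw [div_eq_div_iff (by positivity) (by positivity)]
  ring
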